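/- Let H: ℝ^r ⇉ ℝ^r be a strict convex process (a set-valued map whose graph is a convex cone, with H(x) ≠ ∅ for all x). Then H is weakly asymptotically stable if and only if ⋃_{ℓ≥1} H^{-ℓ}(𝔹) = ℝ^r, where 𝔹 is the closed unit ball. -/
import Mathlib


/-- `ℓ`-fold iterate of a set-valued map: `SIter F ℓ x = F^ℓ(x)`. -/
def SIter {E : Type*} (F : E → Set E) : ℕ → E → Set E
  | 0, x => {x}
  | n + 1, x => ⋃ y ∈ SIter F n x, F y

/-- `H` is weakly asymptotically stable: from every initial state there is a solution of
`x_{k+1} ∈ H(x_k)` converging to `0`. -/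
def WeaklyAsympStable {E : Type*} [Zero E] [TopologicalSpace E] (H : E → Set E) : Prop :=
  ∀ x : E, ∃ f : ℕ → E, f 0 = x ∧ (∀ k, f (k + 1) ∈ H (f k)) ∧
    Filter.Tendsto f Filter.atTop (nhds 0)

section Aux

open Filter Metric

variable {r : ℕ}

variable {H : (EuclideanSpace ℝ (Fin r)) → Set (EuclideanSpace ℝ (Fin r))}

lemma mem_sIter_iff (ℓ : ℕ) (x u : (EuclideanSpace ℝ (Fin r))) :
    u ∈ SIter H ℓ x ↔
      ∃ a : ℕ → (EuclideanSpace ℝ (Fin r)), a 0 = x ∧ (∀ i < ℓ, a (i + 1) ∈ H (a i)) ∧ a ℓ = u := by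
  induction ℓ generalizing u with
  | zero =>
    simp only [SIter, Set.mem_singleton_iff]
    constructor
    · rintro rfl
      exact ⟨fun _ => u, rfl, fun i hi => absurd hi (Nat.not_lt_zero _), rfl⟩
    · rintro ⟨a, h0, -, hl⟩
      rw [← hl, ← h0]
  | succ n ih =>
    simp only [SIter, Set.mem_iUnion]
    constructor
    · rintro ⟨y, hy, hu⟩
      obtain ⟨a, ha0, hstep, han⟩ := (ih y).1 hy
      refine ⟨fun i => if i ≤ n then a i else u, by simp [ha0], ?_, by simp⟩
      intro i hi
      by_cases hin : i < n
      · simpa [Nat.succ_le_of_lt hin, hin.le] using hstep i hin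
      · have : i = n := by omega
        subst this
        simpa [han] using hu
    · rintro ⟨a, ha0, hstep, hl⟩
      exact ⟨a n, (ih (a n)).2 ⟨a, ha0, fun i hi => hstep i (hi.trans (Nat.lt_succ_self n)), rfl⟩,
        hl ▸ hstep n (Nat.lt_succ_self n)⟩

lemma H_add (hconv : Convex ℝ {p : (EuclideanSpace ℝ (Fin r)) × (EuclideanSpace ℝ (Fin r)) | p.2 ∈ H p.1})
    (hcone : ∀ c : ℝ, 0 ≤ c → ∀ x y, y ∈ H x → c • y ∈ H (c • x))
    {x1 x2 y1 y2 : (EuclideanSpace ℝ (Fin r))} (h1 : y1 ∈ H x1) (h2 : y2 ∈ H x2) : y1 + y2 ∈ H (x1 + x2) := by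
  have h := hconv (show ((x1, y1) : (EuclideanSpace ℝ (Fin r)) × (EuclideanSpace ℝ (Fin r))) ∈ _ from h1) (show ((x2, y2) : (EuclideanSpace ℝ (Fin r)) × (EuclideanSpace ℝ (Fin r))) ∈ _ from h2)
    (by norm_num : (0:ℝ) ≤ 1/2) (by norm_num : (0:ℝ) ≤ 1/2) (by norm_num)
  have h' := hcone 2 (by norm_num) _ _ h
  have e1 : (2:ℝ) • ((1/2 : ℝ) • y1 + (1/2 : ℝ) • y2) = y1 + y2 := by
    rw [smul_add, smul_smul, smul_smul]; norm_num
  have e2 : (2:ℝ) • ((1/2 : ℝ) • x1 + (1/2 : ℝ) • x2) = x1 + x2 := by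
    rw [smul_add, smul_smul, smul_smul]; norm_num
  simpa [Prod.smul_mk, e1, e2] using h'

lemma H_zero (hcone : ∀ c : ℝ, 0 ≤ c → ∀ x y, y ∈ H x → c • y ∈ H (c • x))
    (hstrict : ∀ x, (H x).Nonempty) : (0 : (EuclideanSpace ℝ (Fin r))) ∈ H 0 := by
  obtain ⟨y, hy⟩ := hstrict 0
  simpa using hcone 0 le_rfl 0 y hy

lemma exists_infinite_chain (hstrict : ∀ x, (H x).Nonempty) (z : (EuclideanSpace ℝ (Fin r))) :
    ∃ b : ℕ → (EuclideanSpace ℝ (Fin r)), b 0 = z ∧ ∀ k, b (k + 1) ∈ H (b k) := by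
  refine ⟨fun k => Nat.rec z (fun _ p => (hstrict p).choose) k, rfl, fun k => ?_⟩
  exact (hstrict _).choose_spec

lemma chain_sum (hconv : Convex ℝ {p : (EuclideanSpace ℝ (Fin r)) × (EuclideanSpace ℝ (Fin r)) | p.2 ∈ H p.1})
    (hcone : ∀ c : ℝ, 0 ≤ c → ∀ x y, y ∈ H x → c • y ∈ H (c • x))
    (hstrict : ∀ x, (H x).Nonempty) {ι : Type*} (b : ι → ℕ → (EuclideanSpace ℝ (Fin r))) :
    ∀ (s : Finset ι), (∀ i ∈ s, ∀ k, b i (k + 1) ∈ H (b i k)) →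
      ∀ k, (∑ i ∈ s, b i (k + 1)) ∈ H (∑ i ∈ s, b i k) := by
  intro s
  classical
  induction s using Finset.induction with
  | empty => intro _ k; simpa using H_zero hcone hstrict
  | @insert a s ha ih =>
    intro hb k
    rw [Finset.sum_insert ha, Finset.sum_insert ha]
    exact H_add hconv hcone (hb _ (Finset.mem_insert_self _ _) k)
      (ih (fun i hi k => hb i (Finset.mem_insert_of_mem hi) k) k)

lemma coord_le_norm (z : (EuclideanSpace ℝ (Fin r))) (i : Fin r) : |z i| ≤ ‖z‖ := by
  have h := abs_real_inner_le_norm (EuclideanSpace.single i (1:ℝ)) z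
  simpa [EuclideanSpace.inner_single_left, EuclideanSpace.norm_single] using h

lemma exists_growth (hconv : Convex ℝ {p : (EuclideanSpace ℝ (Fin r)) × (EuclideanSpace ℝ (Fin r)) | p.2 ∈ H p.1})
    (hcone : ∀ c : ℝ, 0 ≤ c → ∀ x y, y ∈ H x → c • y ∈ H (c • x))
    (hstrict : ∀ x, (H x).Nonempty) :
    ∃ C : ℕ → ℝ, ∀ z : (EuclideanSpace ℝ (Fin r)), ∃ b : ℕ → (EuclideanSpace ℝ (Fin r)), b 0 = z ∧ (∀ k, b (k + 1) ∈ H (b k)) ∧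
      ∀ k, ‖b k‖ ≤ C k * ‖z‖ := by
  choose g hg0 hgs using fun i : Fin r => exists_infinite_chain hstrict (EuclideanSpace.single i 1)
  choose g' hg0' hgs' using fun i : Fin r =>
    exists_infinite_chain hstrict (-EuclideanSpace.single i 1)
  refine ⟨fun k => ∑ i, (‖g i k‖ + ‖g' i k‖), fun z => ?_⟩
  refine ⟨fun k => ∑ i, (max (z i) 0 • g i k + max (-z i) 0 • g' i k), ?_, ?_, ?_⟩
  · simp only [hg0, hg0']
    have e : ∀ i : Fin r, max (z i) 0 • EuclideanSpace.single i (1:ℝ)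
        + max (-z i) 0 • (-EuclideanSpace.single i (1:ℝ)) = z i • EuclideanSpace.single i 1 := by
      intro i
      rw [smul_neg, ← sub_eq_add_neg, ← sub_smul, max_zero_sub_max_neg_zero_eq_self]
    rw [Finset.sum_congr rfl fun i _ => e i]
    have h := (EuclideanSpace.basisFun (Fin r) ℝ).sum_repr z
    simpa [EuclideanSpace.basisFun_apply, EuclideanSpace.basisFun_repr] using h
  · intro k
    refine chain_sum hconv hcone hstrict
      (fun i k => max (z i) 0 • g i k + max (-z i) 0 • g' i k) Finset.univ (fun i _ k => ?_) k
    exact H_add hconv hcone (hcone _ (le_max_right _ _) _ _ (hgs i k))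
      (hcone _ (le_max_right _ _) _ _ (hgs' i k))
  · intro k
    calc ‖∑ i, (max (z i) 0 • g i k + max (-z i) 0 • g' i k)‖
        ≤ ∑ i, ‖max (z i) 0 • g i k + max (-z i) 0 • g' i k‖ := norm_sum_le _ _
      _ ≤ ∑ i, (‖g i k‖ + ‖g' i k‖) * ‖z‖ := by
          refine Finset.sum_le_sum fun i _ => ?_
          have h1 : max (z i) 0 ≤ ‖z‖ :=
            le_trans (max_le (le_abs_self _) (abs_nonneg _)) (coord_le_norm z i)
          have h2 : max (-z i) 0 ≤ ‖z‖ := by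
            refine le_trans (max_le (le_abs_self _) (abs_nonneg _)) ?_
            rw [abs_neg]; exact coord_le_norm z i
          calc ‖max (z i) 0 • g i k + max (-z i) 0 • g' i k‖
              ≤ ‖max (z i) 0 • g i k‖ + ‖max (-z i) 0 • g' i k‖ := norm_add_le _ _
            _ = max (z i) 0 * ‖g i k‖ + max (-z i) 0 * ‖g' i k‖ := by
                rw [norm_smul, norm_smul, Real.norm_of_nonneg (le_max_right _ _),
                  Real.norm_of_nonneg (le_max_right _ _)]
            _ ≤ ‖z‖ * ‖g i k‖ + ‖z‖ * ‖g' i k‖ :=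
                add_le_add (mul_le_mul_of_nonneg_right h1 (norm_nonneg _))
                  (mul_le_mul_of_nonneg_right h2 (norm_nonneg _))
            _ = (‖g i k‖ + ‖g' i k‖) * ‖z‖ := by ring
      _ = (∑ i, (‖g i k‖ + ‖g' i k‖)) * ‖z‖ := (Finset.sum_mul _ _ _).symm

lemma isOpen_goodSet (hconv : Convex ℝ {p : (EuclideanSpace ℝ (Fin r)) × (EuclideanSpace ℝ (Fin r)) | p.2 ∈ H p.1})
    (hcone : ∀ c : ℝ, 0 ≤ c → ∀ x y, y ∈ H x → c • y ∈ H (c • x))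
    (hstrict : ∀ x, (H x).Nonempty) (ℓ : ℕ) (K : ℝ) :
    IsOpen {x : (EuclideanSpace ℝ (Fin r)) | ∃ a : ℕ → (EuclideanSpace ℝ (Fin r)), a 0 = x ∧ (∀ i < ℓ, a (i + 1) ∈ H (a i)) ∧
      ‖a ℓ‖ < 1/2 ∧ ∀ i ≤ ℓ, ‖a i‖ < K} := by
  obtain ⟨C, hC⟩ := exists_growth hconv hcone hstrict
  rw [Metric.isOpen_iff]
  rintro x ⟨a, ha0, hstep, hend, hbd⟩
  have hne : (Finset.range (ℓ + 1)).Nonempty := ⟨0, by simp⟩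
  set M : ℝ := (Finset.range (ℓ + 1)).sup' hne (fun i => ‖a i‖) with hMdef
  have hMK : M < K := by
    rw [hMdef, Finset.sup'_lt_iff]
    intro i hi
    exact hbd i (Nat.lt_succ_iff.mp (Finset.mem_range.mp hi))
  have haM : ∀ i ≤ ℓ, ‖a i‖ ≤ M := fun i hi => by
    rw [hMdef]
    exact Finset.le_sup' (fun j => ‖a j‖) (Finset.mem_range.mpr (Nat.lt_succ_of_le hi))
  have hend' : ‖a ℓ‖ < 1/2 := hend
  set ε : ℝ := min (1/2 - ‖a ℓ‖) (K - M) with hεdef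
  have hε : 0 < ε := lt_min (by linarith) (by linarith)
  set Cm : ℝ := 1 + ∑ k ∈ Finset.range (ℓ + 1), |C k| with hCmdef
  have hCm : 0 < Cm := by positivity
  have hCk : ∀ k ≤ ℓ, C k ≤ Cm := by
    intro k hk
    have h1 : |C k| ≤ ∑ j ∈ Finset.range (ℓ + 1), |C j| :=
      Finset.single_le_sum (f := fun j => |C j|) (fun j _ => abs_nonneg _)
        (Finset.mem_range.mpr (Nat.lt_succ_of_le hk))
    have h2 : C k ≤ |C k| := le_abs_self _
    rw [hCmdef]; linarith
  refine ⟨ε / Cm, by positivity, ?_⟩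
  intro y hy
  obtain ⟨b, hb0, hbs, hbn⟩ := hC (y - x)
  have key : ∀ i, i ≤ ℓ → ‖b i‖ < ε := by
    intro i hi
    have hyx : ‖y - x‖ < ε / Cm := by rwa [Metric.mem_ball, dist_eq_norm] at hy
    calc ‖b i‖ ≤ C i * ‖y - x‖ := hbn i
      _ ≤ Cm * ‖y - x‖ := mul_le_mul_of_nonneg_right (hCk i hi) (norm_nonneg _)
      _ < Cm * (ε / Cm) := mul_lt_mul_of_pos_left hyx hCm
      _ = ε := by field_simp
  refine ⟨fun k => a k + b k, by simp [ha0, hb0], fun i hi => H_add hconv hcone (hstep i hi) (hbs i),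
    ?_, ?_⟩
  · have h1 : ε ≤ 1/2 - ‖a ℓ‖ := min_le_left _ _
    calc ‖a ℓ + b ℓ‖ ≤ ‖a ℓ‖ + ‖b ℓ‖ := norm_add_le _ _
      _ < ‖a ℓ‖ + ε := by linarith [key ℓ le_rfl]
      _ ≤ 1/2 := by linarith
  · intro i hi
    have h2 : ε ≤ K - M := min_le_right _ _
    calc ‖a i + b i‖ ≤ ‖a i‖ + ‖b i‖ := norm_add_le _ _
      _ < M + ε := by linarith [key i hi, haM i hi]
      _ ≤ K := by linarith

lemma uniform_reach (hconv : Convex ℝ {p : (EuclideanSpace ℝ (Fin r)) × (EuclideanSpace ℝ (Fin r)) | p.2 ∈ H p.1})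
    (hcone : ∀ c : ℝ, 0 ≤ c → ∀ x y, y ∈ H x → c • y ∈ H (c • x))
    (hstrict : ∀ x, (H x).Nonempty)
    (hcov : ∀ z : (EuclideanSpace ℝ (Fin r)), ∃ ℓ, 1 ≤ ℓ ∧ (SIter H ℓ z ∩ Metric.closedBall (0:(EuclideanSpace ℝ (Fin r))) 1).Nonempty) :
    ∃ (L : ℕ) (K : ℝ), 1 ≤ L ∧ 1 ≤ K ∧ ∀ x : (EuclideanSpace ℝ (Fin r)), ‖x‖ ≤ 1 →
      ∃ ℓ, 1 ≤ ℓ ∧ ℓ ≤ L ∧ ∃ a : ℕ → (EuclideanSpace ℝ (Fin r)), a 0 = x ∧ (∀ i < ℓ, a (i + 1) ∈ H (a i)) ∧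
        ‖a ℓ‖ ≤ 1/2 ∧ ∀ i ≤ ℓ, ‖a i‖ ≤ K := by
  classical
  set U : ℕ × ℕ → Set (EuclideanSpace ℝ (Fin r)) := fun p =>
    if 1 ≤ p.1 then
      {x : (EuclideanSpace ℝ (Fin r)) | ∃ a : ℕ → (EuclideanSpace ℝ (Fin r)), a 0 = x ∧ (∀ i < p.1, a (i + 1) ∈ H (a i)) ∧
        ‖a p.1‖ < 1/2 ∧ ∀ i ≤ p.1, ‖a i‖ < (p.2 : ℝ)}
    else ∅ with hUdef
  have hUopen : ∀ p, IsOpen (U p) := by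
    intro p
    rw [hUdef]
    by_cases h : 1 ≤ p.1
    · simpa [h] using isOpen_goodSet hconv hcone hstrict p.1 (p.2 : ℝ)
    · simp [h]
  have hcover : Metric.closedBall (0:(EuclideanSpace ℝ (Fin r))) 1 ⊆ ⋃ p, U p := by
    intro x _
    obtain ⟨ℓ, hℓ1, u, hu, hub⟩ := hcov ((4:ℝ) • x)
    rw [mem_sIter_iff] at hu
    obtain ⟨a, ha0, hstep, haℓ⟩ := hu
    set a' : ℕ → (EuclideanSpace ℝ (Fin r)) := fun k => (4:ℝ)⁻¹ • a k with ha'def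
    have ha'0 : a' 0 = x := by
      rw [ha'def]; simp only [ha0, smul_smul]; norm_num
    have hstep' : ∀ i < ℓ, a' (i + 1) ∈ H (a' i) :=
      fun i hi => hcone _ (by norm_num) _ _ (hstep i hi)
    have hub' : ‖u‖ ≤ 1 := by rwa [Metric.mem_closedBall, dist_zero_right] at hub
    have hend : ‖a' ℓ‖ < 1/2 := by
      rw [ha'def]
      simp only [norm_smul, Real.norm_eq_abs, haℓ]
      rw [abs_of_nonneg (by norm_num : (0:ℝ) ≤ (4:ℝ)⁻¹)]
      nlinarith
    have hne : (Finset.range (ℓ + 1)).Nonempty := ⟨0, by simp⟩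
    obtain ⟨K, hK⟩ := exists_nat_gt ((Finset.range (ℓ + 1)).sup' hne fun i => ‖a' i‖)
    refine Set.mem_iUnion.mpr ⟨(ℓ, K), ?_⟩
    rw [hUdef]
    simp only [if_pos hℓ1]
    refine ⟨a', ha'0, hstep', hend, fun i hi => ?_⟩
    exact lt_of_le_of_lt
      (Finset.le_sup' (fun j => ‖a' j‖) (Finset.mem_range.mpr (Nat.lt_succ_of_le hi))) hK
  obtain ⟨t, ht⟩ := (isCompact_closedBall (0:(EuclideanSpace ℝ (Fin r))) 1).elim_finite_subcover U hUopen hcover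
  refine ⟨max 1 (t.sup Prod.fst), max 1 ((t.sup Prod.snd : ℕ) : ℝ), le_max_left _ _,
    le_max_left _ _, fun x hx => ?_⟩
  have hx' : x ∈ Metric.closedBall (0:(EuclideanSpace ℝ (Fin r))) 1 := by
    rw [Metric.mem_closedBall, dist_zero_right]; exact hx
  have hmem := ht hx'
  rw [Set.mem_iUnion₂] at hmem
  obtain ⟨p, hpt, hxU⟩ := hmem
  by_cases h1 : 1 ≤ p.1
  · rw [hUdef] at hxU
    simp only [if_pos h1] at hxU
    obtain ⟨a, ha0, hstep, hend, hbd⟩ := hxU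
    refine ⟨p.1, h1, le_max_of_le_right (Finset.le_sup (f := Prod.fst) hpt), a, ha0, hstep,
      hend.le, fun i hi => ?_⟩
    calc ‖a i‖ ≤ (p.2 : ℝ) := (hbd i hi).le
      _ ≤ ((t.sup Prod.snd : ℕ) : ℝ) := Nat.cast_le.mpr (Finset.le_sup (f := Prod.snd) hpt)
      _ ≤ max 1 ((t.sup Prod.snd : ℕ) : ℝ) := le_max_right _ _
  · rw [hUdef] at hxU
    simp only [if_neg h1] at hxU
    exact absurd hxU (Set.notMem_empty x)

lemma construct_solution (hconv : Convex ℝ {p : (EuclideanSpace ℝ (Fin r)) × (EuclideanSpace ℝ (Fin r)) | p.2 ∈ H p.1})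
    (hcone : ∀ c : ℝ, 0 ≤ c → ∀ x y, y ∈ H x → c • y ∈ H (c • x))
    (L : ℕ) (K : ℝ) (hL : 1 ≤ L) (hK : 1 ≤ K)
    (hP : ∀ y : (EuclideanSpace ℝ (Fin r)), ‖y‖ ≤ 1 → ∃ ℓ, 1 ≤ ℓ ∧ ℓ ≤ L ∧ ∃ a : ℕ → (EuclideanSpace ℝ (Fin r)), a 0 = y ∧
      (∀ i < ℓ, a (i + 1) ∈ H (a i)) ∧ ‖a ℓ‖ ≤ 1/2 ∧ ∀ i ≤ ℓ, ‖a i‖ ≤ K)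
    (x : (EuclideanSpace ℝ (Fin r))) (hx : ‖x‖ ≤ 1) :
    ∃ f : ℕ → (EuclideanSpace ℝ (Fin r)), f 0 = x ∧ (∀ k, f (k + 1) ∈ H (f k)) ∧ Tendsto f atTop (nhds 0) := by
  classical
  have hP' : ∀ (n : ℕ) (y : (EuclideanSpace ℝ (Fin r))), ‖y‖ ≤ (1/2 : ℝ)^n → ∃ ℓ, 1 ≤ ℓ ∧ ℓ ≤ L ∧
      ∃ a : ℕ → (EuclideanSpace ℝ (Fin r)), a 0 = y ∧ (∀ i < ℓ, a (i + 1) ∈ H (a i)) ∧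
        ‖a ℓ‖ ≤ (1/2 : ℝ)^(n+1) ∧ ∀ i ≤ ℓ, ‖a i‖ ≤ K * (1/2 : ℝ)^n := by
    intro n y hy
    have h2 : ‖((2:ℝ)^n) • y‖ ≤ 1 := by
      rw [norm_smul, Real.norm_eq_abs, abs_of_nonneg (by positivity : (0:ℝ) ≤ (2:ℝ)^n)]
      calc (2:ℝ)^n * ‖y‖ ≤ (2:ℝ)^n * (1/2 : ℝ)^n :=
            mul_le_mul_of_nonneg_left hy (by positivity)
        _ = 1 := by rw [← mul_pow]; norm_num
    obtain ⟨ℓ, h1, hℓL, a, ha0, hstep, hend, hbd⟩ := hP _ h2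
    have hhalf : ((1:ℝ)/2)^n * 2^n = 1 := by rw [← mul_pow]; norm_num
    refine ⟨ℓ, h1, hℓL, fun k => ((1:ℝ)/2)^n • a k, ?_,
      fun i hi => hcone _ (by positivity) _ _ (hstep i hi), ?_, fun i hi => ?_⟩
    · show ((1:ℝ)/2)^n • a 0 = y
      rw [ha0, smul_smul, hhalf, one_smul]
    · show ‖((1:ℝ)/2)^n • a ℓ‖ ≤ (1/2:ℝ)^(n+1)
      rw [norm_smul, Real.norm_eq_abs, abs_of_nonneg (by positivity : (0:ℝ) ≤ (1/2:ℝ)^n)]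
      calc (1/2:ℝ)^n * ‖a ℓ‖ ≤ (1/2:ℝ)^n * (1/2) :=
            mul_le_mul_of_nonneg_left hend (by positivity)
        _ = (1/2:ℝ)^(n+1) := by rw [pow_succ]
    · show ‖((1:ℝ)/2)^n • a i‖ ≤ K * (1/2:ℝ)^n
      rw [norm_smul, Real.norm_eq_abs, abs_of_nonneg (by positivity : (0:ℝ) ≤ (1/2:ℝ)^n)]
      calc (1/2:ℝ)^n * ‖a i‖ ≤ (1/2:ℝ)^n * K :=
            mul_le_mul_of_nonneg_left (hbd i hi) (by positivity)
        _ = K * (1/2:ℝ)^n := by ring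
  have hchoice : ∀ (n : ℕ) (y : (EuclideanSpace ℝ (Fin r))), ∃ (ℓ : ℕ) (a : ℕ → (EuclideanSpace ℝ (Fin r))), ‖y‖ ≤ (1/2 : ℝ)^n →
      (1 ≤ ℓ ∧ ℓ ≤ L ∧ a 0 = y ∧ (∀ i < ℓ, a (i + 1) ∈ H (a i)) ∧
        ‖a ℓ‖ ≤ (1/2 : ℝ)^(n+1) ∧ ∀ i ≤ ℓ, ‖a i‖ ≤ K * (1/2 : ℝ)^n) := by
    intro n y
    by_cases h : ‖y‖ ≤ (1/2 : ℝ)^n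
    · obtain ⟨ℓ, h1, h2, a, ha0, hstep, hend, hbd⟩ := hP' n y h
      exact ⟨ℓ, a, fun _ => ⟨h1, h2, ha0, hstep, hend, hbd⟩⟩
    · exact ⟨1, fun _ => 0, fun hc => absurd hc h⟩
  choose ℓf af hf using hchoice
  set step : ((ℕ → (EuclideanSpace ℝ (Fin r))) × ℕ × ℕ × ℕ) → ((ℕ → (EuclideanSpace ℝ (Fin r))) × ℕ × ℕ × ℕ) := fun s =>
    if s.2.1 + 1 < s.2.2.1 then (s.1, s.2.1 + 1, s.2.2.1, s.2.2.2)
    else (af (s.2.2.2 + 1) (s.1 s.2.2.1), 0, ℓf (s.2.2.2 + 1) (s.1 s.2.2.1), s.2.2.2 + 1)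
    with hstepdef
  set st : ℕ → ((ℕ → (EuclideanSpace ℝ (Fin r))) × ℕ × ℕ × ℕ) := fun k => step^[k] (af 0 x, 0, ℓf 0 x, 0) with hstdef
  have hst0 : st 0 = (af 0 x, 0, ℓf 0 x, 0) := rfl
  have hstS : ∀ k, st (k + 1) = step (st k) := fun k => Function.iterate_succ_apply' step k _
  have hx0 : ‖x‖ ≤ (1/2 : ℝ)^0 := by simpa using hx
  have Inv : ∀ k,
      ((st k).2.1 < (st k).2.2.1) ∧ ((st k).2.2.1 ≤ L) ∧
      (∀ j, j < (st k).2.2.1 → (st k).1 (j + 1) ∈ H ((st k).1 j)) ∧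
      (‖(st k).1 ((st k).2.2.1)‖ ≤ (1/2 : ℝ)^((st k).2.2.2 + 1)) ∧
      (∀ j, j ≤ (st k).2.2.1 → ‖(st k).1 j‖ ≤ K * (1/2 : ℝ)^((st k).2.2.2)) ∧
      (k ≤ L * (st k).2.2.2 + (st k).2.1) := by
    intro k
    induction k with
    | zero =>
      obtain ⟨h1, h2, _, hsteps, hend, hbd⟩ := hf 0 x hx0
      rw [hst0]
      exact ⟨h1, h2, hsteps, hend, hbd, Nat.zero_le _⟩
    | succ k ih =>
      obtain ⟨hiℓ, hℓL, hsteps, hend, hbd, hcount⟩ := ih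
      rw [hstS]
      by_cases hlt : (st k).2.1 + 1 < (st k).2.2.1
      · rw [hstepdef]
        simp only [if_pos hlt]
        refine ⟨hlt, hℓL, hsteps, hend, hbd, ?_⟩
        calc k + 1 ≤ (L * (st k).2.2.2 + (st k).2.1) + 1 := Nat.succ_le_succ hcount
          _ = L * (st k).2.2.2 + ((st k).2.1 + 1) := Nat.add_assoc _ _ _
      · have heq : (st k).2.1 + 1 = (st k).2.2.1 := by omega
        obtain ⟨h1, h2, ha0, hsteps', hend', hbd'⟩ :=
          hf ((st k).2.2.2 + 1) ((st k).1 ((st k).2.2.1)) hend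
        rw [hstepdef]
        simp only [if_neg hlt]
        refine ⟨h1, h2, hsteps', hend', hbd', ?_⟩
        calc k + 1 ≤ (L * (st k).2.2.2 + (st k).2.1) + 1 := Nat.succ_le_succ hcount
          _ = L * (st k).2.2.2 + ((st k).2.1 + 1) := Nat.add_assoc _ _ _
          _ ≤ L * (st k).2.2.2 + L := Nat.add_le_add_left (heq ▸ hℓL) _
          _ = L * ((st k).2.2.2 + 1) := (Nat.mul_succ L _).symm
          _ = L * ((st k).2.2.2 + 1) + 0 := (Nat.add_zero _).symm
  set f : ℕ → (EuclideanSpace ℝ (Fin r)) := fun k => (st k).1 ((st k).2.1) with hfdef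
  refine ⟨f, ?_, ?_, ?_⟩
  · have h := (hf 0 x hx0).2.2.1
    rw [hfdef]
    simpa [hst0] using h
  · intro k
    obtain ⟨hiℓ, hℓL, hsteps, hend, hbd, _⟩ := Inv k
    by_cases hlt : (st k).2.1 + 1 < (st k).2.2.1
    · have hfk1 : f (k + 1) = (st k).1 ((st k).2.1 + 1) := by
        rw [hfdef]
        simp only [hstS, hstepdef, if_pos hlt]
      rw [hfk1]
      exact hsteps _ (by omega)
    · have heq : (st k).2.1 + 1 = (st k).2.2.1 := by omega
      have ha0 := (hf ((st k).2.2.2 + 1) ((st k).1 ((st k).2.2.1)) hend).2.2.1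
      have hfk1 : f (k + 1) = (st k).1 ((st k).2.2.1) := by
        rw [hfdef]
        simp only [hstS, hstepdef, if_neg hlt]
        exact ha0
      rw [hfk1, ← heq]
      exact hsteps _ (by omega)
  · have hb : ∀ k, ‖f k‖ ≤ K * (1/2 : ℝ)^((st k).2.2.2) :=
      fun k => (Inv k).2.2.2.2.1 _ (le_of_lt (Inv k).1)
    have hn : Tendsto (fun k => (st k).2.2.2) atTop atTop := by
      rw [Filter.tendsto_atTop]
      intro b
      rw [eventually_atTop]
      refine ⟨L * (b + 1), fun k hk => ?_⟩
      obtain ⟨hiℓ, hℓL, _, _, _, hcount⟩ := Inv k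
      by_contra hcon
      push_neg at hcon
      have h1 : (st k).2.1 < L := lt_of_lt_of_le hiℓ hℓL
      have h2 : k < k :=
        calc k ≤ L * (st k).2.2.2 + (st k).2.1 := hcount
          _ < L * (st k).2.2.2 + L := Nat.add_lt_add_left h1 _
          _ = L * ((st k).2.2.2 + 1) := (Nat.mul_succ L _).symm
          _ ≤ L * b := Nat.mul_le_mul_left L hcon
          _ ≤ L * (b + 1) := Nat.mul_le_mul_left L (Nat.le_succ b)
          _ ≤ k := hk
      exact absurd h2 (lt_irrefl k)
    have h0 : Tendsto (fun k => K * (1/2 : ℝ)^((st k).2.2.2)) atTop (nhds 0) := by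
      have hpow : Tendsto (fun m : ℕ => ((1:ℝ)/2)^m) atTop (nhds 0) :=
        tendsto_pow_atTop_nhds_zero_of_lt_one (by norm_num) (by norm_num)
      have h := (hpow.comp hn).const_mul K
      simpa [Function.comp] using h
    exact squeeze_zero_norm hb h0

end Aux

/-- A strict convex process `H : ℝ^r ⇉ ℝ^r` is weakly asymptotically stable iff
`⋃_{ℓ≥1} H^{-ℓ}(𝔹) = ℝ^r`. -/
theorem stmt7 {r : ℕ} (H : EuclideanSpace ℝ (Fin r) → Set (EuclideanSpace ℝ (Fin r)))
    (hconv : Convex ℝ {p : EuclideanSpace ℝ (Fin r) × EuclideanSpace ℝ (Fin r) | p.2 ∈ H p.1})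
    (hcone : ∀ c : ℝ, 0 ≤ c → ∀ x y, y ∈ H x → c • y ∈ H (c • x))
    (hstrict : ∀ x, (H x).Nonempty) :
    WeaklyAsympStable H ↔
      (⋃ ℓ ∈ {ℓ : ℕ | 1 ≤ ℓ},
        {x | (SIter H ℓ x ∩ Metric.closedBall (0 : EuclideanSpace ℝ (Fin r)) 1).Nonempty}) =
        Set.univ := by
  open Filter Metric in
  constructor
  · intro hW
    rw [Set.eq_univ_iff_forall]
    intro x
    obtain ⟨f, hf0, hfs, hft⟩ := hW x
    have hmem : ∀ k, f k ∈ SIter H k x := by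
      intro k
      induction k with
      | zero => simp [SIter, hf0]
      | succ k ih =>
        simp only [SIter, Set.mem_iUnion]
        exact ⟨f k, ih, hfs k⟩
    obtain ⟨N, hN⟩ := Filter.mem_atTop_sets.mp
      (hft (Metric.closedBall_mem_nhds (0 : EuclideanSpace ℝ (Fin r)) one_pos))
    refine Set.mem_iUnion₂.mpr ⟨N + 1, Nat.le_add_left 1 N, ⟨f (N + 1), hmem (N + 1), ?_⟩⟩
    exact hN (N + 1) (Nat.le_succ N)
  · intro hcov x
    have hcov' : ∀ z : EuclideanSpace ℝ (Fin r), ∃ ℓ, 1 ≤ ℓ ∧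
        (SIter H ℓ z ∩ Metric.closedBall (0 : EuclideanSpace ℝ (Fin r)) 1).Nonempty := by
      intro z
      have hz := Set.eq_univ_iff_forall.mp hcov z
      rw [Set.mem_iUnion₂] at hz
      obtain ⟨ℓ, hℓ, hmem⟩ := hz
      exact ⟨ℓ, hℓ, hmem⟩
    obtain ⟨L, K, hL, hK, hP⟩ := uniform_reach hconv hcone hstrict hcov'
    set c : ℝ := ‖x‖ + 1 with hcdef
    have hc : 0 < c := by positivity
    have hxc : ‖x‖ ≤ c := by rw [hcdef]; linarith [norm_nonneg x]
    have hx' : ‖c⁻¹ • x‖ ≤ 1 := by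
      rw [norm_smul, Real.norm_eq_abs, abs_of_pos (inv_pos.mpr hc)]
      calc c⁻¹ * ‖x‖ ≤ c⁻¹ * c := mul_le_mul_of_nonneg_left hxc (inv_pos.mpr hc).le
        _ = 1 := inv_mul_cancel₀ hc.ne'
    obtain ⟨f, hf0, hfs, hft⟩ := construct_solution hconv hcone L K hL hK hP _ hx'
    refine ⟨fun k => c • f k, ?_, fun k => hcone c hc.le _ _ (hfs k), ?_⟩
    · show c • f 0 = x
      rw [hf0, smul_smul, mul_inv_cancel₀ hc.ne', one_smul]
    · have h := hft.const_smul c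
      simpa using h
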